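/- For every natural number t and every prime p ≥ 11, the p-th cyclotomic polynomial Φ_p(x) does not divide Q_t(x) in ℤ[x]. -/

import Mathlib

open Polynomial

/-- The polynomial `Q_t(x)`. -/
noncomputable def Qpoly (t : ℕ) : Polynomial ℤ :=
  X ^ (4 * t + 7) - X ^ (4 * t + 5) - X ^ (4 * t + 4) + 2 * X ^ (2 * t + 4)
    + X ^ (2 * t + 3) + X ^ (2 * t + 2) + X ^ (2 * t) - 2 * X ^ (t + 3) - X ^ 2 - 1

/-- Small positive naturals are nonzero mod a prime `p ≥ 11`. -/
lemma small_ne_zero_mod (p : ℕ) (hp11 : 11 ≤ p) {c : ℕ} (hc : 0 < c) (hlt : c ≤ 10)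
    (h : ((c : ℕ) : ZMod p) = 0) : False := by
  haveI : NeZero p := ⟨by omega⟩
  have hd : p ∣ c := (ZMod.natCast_eq_zero_iff c p).mp h
  have := Nat.le_of_dvd hc hd
  omega

/-- For every natural number `t` and every prime `p ≥ 11`, the `p`-th cyclotomic
polynomial does not divide `Q_t(x)` in `ℤ[x]`. -/
theorem cyclotomic_prime_not_dvd_Q (t p : ℕ) (hp : p.Prime) (hp11 : 11 ≤ p) :
    ¬ Polynomial.cyclotomic p ℤ ∣ Qpoly t := by
  haveI : Fact p.Prime := ⟨hp⟩
  haveI : NeZero p := ⟨by omega⟩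
  intro h
  -- Step 1: `X ^ p - 1 ∣ Qpoly t`.
  have hXp : (X ^ p - 1 : ℤ[X]) ∣ Qpoly t := by
    obtain ⟨g, hg⟩ := h
    have hroot : (X - 1 : ℤ[X]) ∣ Qpoly t := by
      have : (X - C (1:ℤ)) ∣ Qpoly t := (dvd_iff_isRoot).mpr (by simp [Qpoly, IsRoot])
      simpa using this
    have hprime : Prime (X - 1 : ℤ[X]) := by simpa using prime_X_sub_C (1 : ℤ)
    have hnd : ¬ (X - 1 : ℤ[X]) ∣ cyclotomic p ℤ := by
      intro ⟨k, hk⟩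
      have := congrArg (Polynomial.eval 1) hk
      simp [eval_one_cyclotomic_prime] at this
      omega
    rw [hg] at hroot
    rcases hprime.2.2 _ _ hroot with h1 | h2
    · exact absurd h1 hnd
    · obtain ⟨g', hg'⟩ := h2
      exact ⟨g', by rw [hg, hg', ← cyclotomic_prime_mul_X_sub_one ℤ p]; ring⟩
  obtain ⟨g, hg⟩ := hXp
  -- Step 2: from the derivative at 1, `p ∣ 4 t + 3`.
  have hdvd : (p : ℤ) ∣ 4 * (t : ℤ) + 3 := by
    have h1 : (Qpoly t).derivative.eval 1 = 4 * (t : ℤ) + 3 := by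
      simp [Qpoly, derivative_X_pow]; ring
    have h2 : (Qpoly t).derivative.eval 1 = (p : ℤ) * (g.eval 1) := by
      rw [hg, derivative_mul, eval_add, eval_mul, eval_mul]
      simp [derivative_X_pow]
    rw [h1] at h2
    exact ⟨g.eval 1, h2⟩
  have h43 : 4 * (t : ZMod p) + 3 = 0 := by
    have : ((4 * (t : ℤ) + 3 : ℤ) : ZMod p) = 0 :=
      (ZMod.intCast_zmod_eq_zero_iff_dvd _ p).mpr hdvd
    push_cast at this
    exact this
  -- Step 3: map to the group algebra `ℤ[ZMod p]` and look at the coefficient of `2 t + 4`.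
  set φ : ℤ[X] →ₐ[ℤ] AddMonoidAlgebra ℤ (ZMod p) :=
    aeval (AddMonoidAlgebra.single (1 : ZMod p) (1:ℤ)) with hφ
  have hzero : φ (Qpoly t) = 0 := by
    have hXp0 : φ (X ^ p - 1) = 0 := by
      rw [hφ]
      simp only [map_sub, map_pow, aeval_X, map_one, AddMonoidAlgebra.single_pow, one_pow,
        nsmul_eq_mul, mul_one, ZMod.natCast_self]
      rw [AddMonoidAlgebra.one_def]
      simp
    rw [hg, map_mul, hXp0, zero_mul]
  have hq : Qpoly t = X ^ (4 * t + 7) - X ^ (4 * t + 5) - X ^ (4 * t + 4)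
      + (X ^ (2 * t + 4) + X ^ (2 * t + 4))
      + X ^ (2 * t + 3) + X ^ (2 * t + 2) + X ^ (2 * t) - (X ^ (t + 3) + X ^ (t + 3))
      - X ^ 2 - 1 := by
    rw [Qpoly]; ring
  rw [hq, hφ] at hzero
  simp only [map_sub, map_add, map_pow, aeval_X, map_one,
    AddMonoidAlgebra.single_pow, one_pow, nsmul_eq_mul, mul_one,
    AddMonoidAlgebra.one_def] at hzero
  have h2 : (AddMonoidAlgebra.single (((4 * t + 7 : ℕ)) : ZMod p) (1:ℤ)
      - AddMonoidAlgebra.single ((4 * t + 5 : ℕ) : ZMod p) 1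
      - AddMonoidAlgebra.single ((4 * t + 4 : ℕ) : ZMod p) 1
      + (AddMonoidAlgebra.single ((2 * t + 4 : ℕ) : ZMod p) 1
         + AddMonoidAlgebra.single ((2 * t + 4 : ℕ) : ZMod p) 1)
      + AddMonoidAlgebra.single ((2 * t + 3 : ℕ) : ZMod p) 1
      + AddMonoidAlgebra.single ((2 * t + 2 : ℕ) : ZMod p) 1
      + AddMonoidAlgebra.single ((2 * t : ℕ) : ZMod p) 1
      - (AddMonoidAlgebra.single ((t + 3 : ℕ) : ZMod p) 1
         + AddMonoidAlgebra.single ((t + 3 : ℕ) : ZMod p) 1)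
      - AddMonoidAlgebra.single ((2 : ℕ) : ZMod p) 1
      - AddMonoidAlgebra.single (0 : ZMod p) 1 : AddMonoidAlgebra ℤ (ZMod p)).coeff ((2 * t + 4 : ℕ) : ZMod p)
      = (0 : AddMonoidAlgebra ℤ (ZMod p)).coeff ((2 * t + 4 : ℕ) : ZMod p) := by rw [hzero]
  simp only [AddMonoidAlgebra.coeff_sub, AddMonoidAlgebra.coeff_add, AddMonoidAlgebra.coeff_single,
    AddMonoidAlgebra.coeff_zero, Finsupp.sub_apply, Finsupp.add_apply, Finsupp.single_apply,
    Finsupp.coe_zero, Pi.zero_apply] at h2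
  -- Refute each spurious coincidence of exponents mod `p`.
  have c1 : ¬ (((4 * t + 7 : ℕ) : ZMod p) = ((2 * t + 4 : ℕ) : ZMod p)) := by
    intro hc; refine small_ne_zero_mod p hp11 (c := 3) (by norm_num) (by norm_num) ?_
    push_cast at hc ⊢; linear_combination 2 * hc - h43
  have c2 : ¬ (((4 * t + 5 : ℕ) : ZMod p) = ((2 * t + 4 : ℕ) : ZMod p)) := by
    intro hc; refine small_ne_zero_mod p hp11 (c := 1) (by norm_num) (by norm_num) ?_
    push_cast at hc ⊢; linear_combination h43 - 2 * hc
  have c3 : ¬ (((4 * t + 4 : ℕ) : ZMod p) = ((2 * t + 4 : ℕ) : ZMod p)) := by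
    intro hc; refine small_ne_zero_mod p hp11 (c := 3) (by norm_num) (by norm_num) ?_
    push_cast at hc ⊢; linear_combination h43 - 2 * hc
  have c4 : ¬ (((2 * t + 3 : ℕ) : ZMod p) = ((2 * t + 4 : ℕ) : ZMod p)) := by
    intro hc; refine small_ne_zero_mod p hp11 (c := 1) (by norm_num) (by norm_num) ?_
    push_cast at hc ⊢; linear_combination -hc
  have c5 : ¬ (((2 * t + 2 : ℕ) : ZMod p) = ((2 * t + 4 : ℕ) : ZMod p)) := by
    intro hc; refine small_ne_zero_mod p hp11 (c := 2) (by norm_num) (by norm_num) ?_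
    push_cast at hc ⊢; linear_combination -hc
  have c6 : ¬ (((2 * t : ℕ) : ZMod p) = ((2 * t + 4 : ℕ) : ZMod p)) := by
    intro hc; refine small_ne_zero_mod p hp11 (c := 4) (by norm_num) (by norm_num) ?_
    push_cast at hc ⊢; linear_combination -hc
  have c7 : ¬ (((t + 3 : ℕ) : ZMod p) = ((2 * t + 4 : ℕ) : ZMod p)) := by
    intro hc; refine small_ne_zero_mod p hp11 (c := 1) (by norm_num) (by norm_num) ?_
    push_cast at hc ⊢; linear_combination -4 * hc - h43
  have c8 : ¬ (((2 : ℕ) : ZMod p) = ((2 * t + 4 : ℕ) : ZMod p)) := by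
    intro hc; refine small_ne_zero_mod p hp11 (c := 1) (by norm_num) (by norm_num) ?_
    push_cast at hc ⊢; linear_combination -2 * hc - h43
  have c9 : ¬ ((0 : ZMod p) = ((2 * t + 4 : ℕ) : ZMod p)) := by
    intro hc; refine small_ne_zero_mod p hp11 (c := 5) (by norm_num) (by norm_num) ?_
    push_cast at hc ⊢; linear_combination -2 * hc - h43
  simp only [if_true, if_neg c1, if_neg c2, if_neg c3, if_neg c4, if_neg c5, if_neg c6,
    if_neg c7, if_neg c8, if_neg c9] at h2
  norm_num at h2
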